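/- Let k ≥ 1 be an integer, let x, s ∈ ℂ, and let R be the multiset of roots in ℂ, counted with multiplicity, of the monic polynomial X^k − x·X^{k−1} − s (so R has cardinality k). Then for every integer m ≥ 1, the power sum ∑_{α∈R} α^m equals the generalized Lucas polynomial L_m^{(k)}(x, s). -/

import Mathlib

/-- The generalized Lucas polynomials `L_n^{(k)}(x, s)` (over `ℂ`):
`L_0 = k`, `L_n = x^n` for `0 < n < k`, and `L_n = x·L_{n-1} + s·L_{n-k}` for `n ≥ k`. -/
noncomputable def Lk (k : ℕ) (x s : ℂ) : ℕ → ℂ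
  | n =>
    if n = 0 then (k : ℂ)
    else if n < k then x ^ n
    else if k = 0 then 0
    else x * Lk k x s (n - 1) + s * Lk k x s (n - k)
  termination_by n => n
  decreasing_by all_goals omega

open Finset Polynomial in
lemma newton_multiset (R : Multiset ℂ) (m : ℕ) (hm : 0 < m) :
    (R.map (· ^ m)).sum = (-1) ^ (m + 1) * m * R.esymm m -
      ∑ a ∈ Finset.HasAntidiagonal.antidiagonal m with a.1 ∈ Set.Ioo 0 m,
        (-1) ^ a.1 * R.esymm a.1 * (R.map (· ^ a.2)).sum := by
  obtain ⟨l, rfl⟩ : ∃ l : List ℂ, R = ↑l := ⟨R.toList, R.coe_toList.symm⟩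
  have key := congrArg (MvPolynomial.aeval l.get)
    (MvPolynomial.psum_eq_mul_esymm_sub_sum (Fin l.length) ℂ m hm)
  have he : ∀ n, MvPolynomial.aeval l.get (MvPolynomial.esymm (Fin l.length) ℂ n)
      = (l : Multiset ℂ).esymm n := by
    intro n
    rw [MvPolynomial.aeval_esymm_eq_multiset_esymm, Fin.univ_val_map, List.ofFn_get]
  have hp : ∀ n, MvPolynomial.aeval l.get (MvPolynomial.psum (Fin l.length) ℂ n)
      = ((l : Multiset ℂ).map (· ^ n)).sum := by
    intro n
    rw [MvPolynomial.psum, map_sum]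
    simp only [map_pow, MvPolynomial.aeval_X]
    show (Finset.univ.val.map (fun i => l.get i ^ n)).sum = _
    rw [show (fun i => l.get i ^ n) = (· ^ n) ∘ l.get from rfl,
      ← Multiset.map_map, Fin.univ_val_map, List.ofFn_get]
  rw [map_sub, map_mul, map_mul, map_sum] at key
  simp only [map_mul, map_pow, map_neg, map_one, map_natCast] at key
  rw [hp, he] at key
  rw [key]
  congr 1
  apply Finset.sum_congr rfl
  intro a _
  rw [he, hp]

open Polynomial in
theorem stmt7 (k : ℕ) (hk : 1 ≤ k) (x s : ℂ) (R : Multiset ℂ)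
    (hR : R = (X ^ k - C x * X ^ (k - 1) - C s : ℂ[X]).roots) :
    ∀ m : ℕ, 1 ≤ m → (R.map fun α => α ^ m).sum = Lk k x s m := by
  set P : ℂ[X] := X ^ k - C x * X ^ (k - 1) - C s with hP
  have hdeg : P.natDegree = k := by
    rw [hP]
    compute_degree!
    rw [if_neg (by omega), if_neg (by omega)]
    norm_num
  have hmonic : P.Monic := by
    rw [Monic, Polynomial.leadingCoeff, hdeg, hP]
    simp [coeff_X_pow, coeff_C, show ¬ (k - 1 = k) by omega,
      show ¬ (k = k - 1) by omega, show k ≠ 0 by omega]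
  have hcard : Multiset.card R = k := by
    rw [hR, (splits_iff_card_roots.mp (IsAlgClosed.splits P)), hdeg]
  have hcr : Multiset.card P.roots = P.natDegree := by rw [hdeg, ← hR, hcard]
  have hvieta : ∀ i, i ≤ k → P.coeff (k - i) = (-1) ^ i * R.esymm i := by
    intro i hi
    have h := Polynomial.coeff_eq_esymm_roots_of_card hcr (k := k - i)
      (by rw [hdeg]; omega)
    rw [hmonic.leadingCoeff, one_mul, hdeg, ← hR,
      show k - (k - i) = i by omega] at h
    exact h
  have hesymm1 : 2 ≤ k → R.esymm 1 = x := by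
    intro h2
    have h := hvieta 1 (by omega)
    have hc : P.coeff (k - 1) = -x := by
      rw [hP]
      simp [coeff_X_pow, coeff_C, show ¬ (k - 1 = k) by omega,
        show k - 1 ≠ 0 by omega]
    rw [hc] at h
    linear_combination h
  have hesymm0 : ∀ i, 2 ≤ i → i < k → R.esymm i = 0 := by
    intro i h2 hik
    have h := hvieta i (by omega)
    have hc : P.coeff (k - i) = 0 := by
      rw [hP]
      simp [coeff_X_pow, coeff_C, show ¬ (k - i = k) by omega,
        show ¬ (k - i = k - 1) by omega, show k - i ≠ 0 by omega]
    rw [hc] at h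
    simpa using h.symm
  have hroot : ∀ α ∈ R, α ^ k = x * α ^ (k - 1) + s := by
    intro α hα
    rw [hR] at hα
    have h0 : eval α P = 0 := (mem_roots hmonic.ne_zero).mp hα
    rw [hP] at h0
    simp only [eval_sub, eval_pow, eval_X, eval_mul, eval_C] at h0
    linear_combination h0
  suffices H : ∀ m : ℕ, (R.map fun α => α ^ m).sum = Lk k x s m by
    intro m _; exact H m
  intro m
  induction m using Nat.strong_induction_on with
  | _ m IH =>
    rcases Nat.eq_zero_or_pos m with hm0 | hm0
    · subst hm0
      simp only [pow_zero]
      rw [Multiset.map_const', Multiset.sum_replicate, hcard, nsmul_eq_mul, mul_one]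
      rw [Lk]; simp
    rcases lt_or_ge m k with hmk | hmk
    · -- 0 < m < k, so k ≥ 2
      have hLk : Lk k x s m = x ^ m := by rw [Lk]; simp [show m ≠ 0 by omega, hmk]
      rw [hLk]
      rw [newton_multiset R m hm0]
      rcases Nat.eq_or_lt_of_le hm0 with hm1 | hm2
      · -- m = 1
        rw [← hm1]
        rw [Finset.filter_false_of_mem (by intro a ha; simp [Set.mem_Ioo]; omega),
          Finset.sum_empty, hesymm1 (by omega)]
        norm_num
      · -- m ≥ 2
        rw [hesymm0 m (by omega) hmk, mul_zero, zero_sub]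
        rw [Finset.sum_eq_single_of_mem (1, m - 1)
          (by simp [Finset.mem_antidiagonal, Set.mem_Ioo]; omega)
          (by
            rintro ⟨i, j⟩ hmem hne
            simp only [Finset.mem_filter, Finset.HasAntidiagonal.mem_antidiagonal, Set.mem_Ioo] at hmem
            have hi1 : i ≠ 1 := by
              rintro rfl
              exact hne (by simp; omega)
            rw [hesymm0 i (by omega) (by omega), mul_zero, zero_mul])]
        simp only [pow_one, hesymm1 (by omega)]
        rw [IH (m - 1) (by omega)]
        have hL1 : Lk k x s (m - 1) = x ^ (m - 1) := by
          rw [Lk]; simp [show m - 1 ≠ 0 by omega, show m - 1 < k by omega]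
        rw [hL1]
        have : x * x ^ (m - 1) = x ^ m := by
          rw [← pow_succ']; congr 1; omega
        linear_combination this
    · -- m ≥ k
      have hstep : ∀ α ∈ R, α ^ m = x * α ^ (m - 1) + s * α ^ (m - k) := by
        intro α hα
        have h1 := hroot α hα
        have h2 : α ^ m = α ^ (m - k) * α ^ k := by
          rw [← pow_add]; congr 1; omega
        have h3 : α ^ (m - k) * α ^ (k - 1) = α ^ (m - 1) := by
          rw [← pow_add]; congr 1; omega
        rw [h2, h1]
        ring_nf
        linear_combination (x : ℂ) * h3
      rw [Multiset.map_congr rfl hstep]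
      have : (R.map fun α => x * α ^ (m - 1) + s * α ^ (m - k)).sum
          = x * (R.map fun α => α ^ (m - 1)).sum + s * (R.map fun α => α ^ (m - k)).sum := by
        rw [Multiset.sum_map_add]
        congr 1 <;> rw [Multiset.sum_map_mul_left]
      rw [this, IH (m - 1) (by omega), IH (m - k) (by omega)]
      rw [show Lk k x s m = x * Lk k x s (m - 1) + s * Lk k x s (m - k) by
        rw [Lk]; simp [show m ≠ 0 by omega, show ¬ m < k by omega, show k ≠ 0 by omega]]
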